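/- For integers k ≥ 1, n ≥ 1 and a multi-index L = (l₁,…,lₙ) with 1 ≤ l_i ≤ k for each i and max_i l_i ≤ k ≤ ∏_i l_i, the number of injective functions f from {1,…,k} to the product set {1,…,l₁} × ⋯ × {1,…,lₙ} such that for every coordinate i, every value in {1,…,l_i} occurs as the i-th coordinate of some element of the image of f, equals (∏_{i=1}^{n} l_i!) · c^{(k)}_L. -/

import Mathlib

open Nat

/-- Unsigned Stirling numbers of the first kind: the number of permutations of
`n` elements with exactly `p` cycles. -/
def stirling1 : ℕ → ℕ → ℕ
  | 0, 0 => 1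
  | 0, _ + 1 => 0
  | _ + 1, 0 => 0
  | n + 1, p + 1 => n * stirling1 n (p + 1) + stirling1 n p

/-- Stirling numbers of the second kind: the number of partitions of an
`n`-element set into `p` nonempty blocks (`stirling2 p l = 0` when `p < l`). -/
def stirling2 : ℕ → ℕ → ℕ
  | 0, 0 => 1
  | 0, _ + 1 => 0
  | _ + 1, 0 => 0
  | n + 1, p + 1 => (p + 1) * stirling2 n (p + 1) + stirling2 n p

open Polynomial Finset Function

lemma stirling2_zero_right : ∀ n, stirling2 (n+1) 0 = 0 := fun _ => rfl
lemma stirling1_zero_right : ∀ n, stirling1 (n+1) 0 = 0 := fun _ => rfl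

lemma stirling2_eq_zero_of_lt : ∀ {p l : ℕ}, p < l → stirling2 p l = 0 := by
  intro p
  induction p with
  | zero => intro l hl; obtain ⟨l, rfl⟩ := Nat.exists_eq_add_of_lt hl; rfl
  | succ p ih =>
    intro l hl
    obtain ⟨l, rfl⟩ : ∃ l', l = l' + 1 := ⟨l - 1, by omega⟩
    show (l + 1) * stirling2 p (l + 1) + stirling2 p l = 0
    rw [ih (by omega), ih (by omega), mul_zero]

lemma stirling1_eq_zero_of_lt : ∀ {p l : ℕ}, p < l → stirling1 p l = 0 := by
  intro p
  induction p with
  | zero => intro l hl; obtain ⟨l, rfl⟩ := Nat.exists_eq_add_of_lt hl; rfl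
  | succ p ih =>
    intro l hl
    obtain ⟨l, rfl⟩ : ∃ l', l = l' + 1 := ⟨l - 1, by omega⟩
    show p * stirling1 p (l + 1) + stirling1 p l = 0
    rw [ih (by omega), ih (by omega), mul_zero]

/-- signed Stirling numbers of the first kind -/
def sgnS1 (k p : ℕ) : ℤ := (-1) ^ (k + p) * (stirling1 k p : ℤ)

lemma sgnS1_succ_succ (k p : ℕ) :
    sgnS1 (k+1) (p+1) = sgnS1 k p - k * sgnS1 k (p+1) := by
  show ((-1:ℤ)) ^ (k + 1 + (p + 1)) * ((k * stirling1 k (p+1) + stirling1 k p : ℕ) : ℤ) = _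
  unfold sgnS1
  push_cast
  rw [show k + 1 + (p + 1) = (k + p) + 2 by ring, show k + (p+1) = (k+p)+1 by ring]
  rw [pow_add, pow_succ]
  ring

lemma id1 : ∀ (k : ℕ) (m : ℤ),
    m ^ k = ∑ p ∈ range (k+1), (stirling2 k p : ℤ) * (descPochhammer ℤ p).eval m := by
  intro k
  induction k with
  | zero => intro m; simp [stirling2]
  | succ k ih =>
    intro m
    have key : ∀ p : ℕ, m * (descPochhammer ℤ p).eval m
        = (descPochhammer ℤ (p+1)).eval m + p * (descPochhammer ℤ p).eval m := by
      intro p; rw [descPochhammer_succ_eval]; ring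
    calc m ^ (k+1) = ∑ p ∈ range (k+1), (stirling2 k p : ℤ) *
            (m * (descPochhammer ℤ p).eval m) := by
          rw [pow_succ, mul_comm, ih, Finset.mul_sum]
          exact Finset.sum_congr rfl (by intros; ring)
      _ = (∑ p ∈ range (k+1), (stirling2 k p : ℤ) * (descPochhammer ℤ (p+1)).eval m)
          + ∑ p ∈ range (k+1), ((p : ℤ) * (stirling2 k p : ℤ)) * (descPochhammer ℤ p).eval m := by
          rw [← Finset.sum_add_distrib]
          exact Finset.sum_congr rfl (fun p _ => by rw [key]; ring)
      _ = ∑ p ∈ range (k+2), (stirling2 (k+1) p : ℤ) * (descPochhammer ℤ p).eval m := by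
          rw [Finset.sum_range_succ'
            (fun p => (stirling2 (k+1) p : ℤ) * (descPochhammer ℤ p).eval m) (k+1)]
          have h0 : (stirling2 (k+1) 0 : ℤ) * (descPochhammer ℤ 0).eval m = 0 := by
            rw [stirling2_zero_right]; simp
          rw [h0, add_zero]
          have hshift : ∑ p ∈ range (k+1), ((p : ℤ) * (stirling2 k p : ℤ)) * (descPochhammer ℤ p).eval m
              = ∑ p ∈ range (k+1), (((p : ℤ)+1) * (stirling2 k (p+1) : ℤ)) * (descPochhammer ℤ (p+1)).eval m := by
            rw [Finset.sum_range_succ'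
              (fun p => ((p : ℤ) * (stirling2 k p : ℤ)) * (descPochhammer ℤ p).eval m) k]
            rw [Finset.sum_range_succ
              (fun p => (((p:ℤ)+1) * (stirling2 k (p+1) : ℤ)) * (descPochhammer ℤ (p+1)).eval m) k]
            have hz : (stirling2 k (k+1) : ℤ) = 0 := by
              rw [stirling2_eq_zero_of_lt (Nat.lt_succ_self k)]; rfl
            rw [hz]
            push_cast
            ring
          rw [hshift, ← Finset.sum_add_distrib]
          refine (Finset.sum_congr rfl (fun p _ => ?_)).symm
          have : (stirling2 (k+1) (p+1) : ℤ) = ((p:ℤ)+1) * stirling2 k (p+1) + stirling2 k p := by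
            rw [show stirling2 (k+1) (p+1) = (p + 1) * stirling2 k (p + 1) + stirling2 k p from rfl]
            push_cast; ring
          rw [this]; ring

lemma id2 : ∀ (k : ℕ) (m : ℤ),
    (descPochhammer ℤ k).eval m = ∑ p ∈ range (k+1), sgnS1 k p * m ^ p := by
  intro k
  induction k with
  | zero => intro m; simp [sgnS1, stirling1]
  | succ k ih =>
    intro m
    rw [descPochhammer_succ_eval, ih]
    have e1 : ∑ p ∈ range (k+2), sgnS1 (k+1) p * m ^ p
        = ∑ p ∈ range (k+1), sgnS1 (k+1) (p+1) * m ^ (p+1) := by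
      rw [Finset.sum_range_succ' (fun p => sgnS1 (k+1) p * m ^ p) (k+1)]
      have h0 : sgnS1 (k+1) 0 = 0 := by
        unfold sgnS1; rw [stirling1_zero_right]; simp
      rw [h0]
      simp
    rw [e1]
    have e2 : ∀ p, sgnS1 (k+1) (p+1) * m ^ (p+1)
        = sgnS1 k p * m ^ (p+1) - (k : ℤ) * (sgnS1 k (p+1) * m ^ (p+1)) := by
      intro p; rw [sgnS1_succ_succ]; ring
    rw [Finset.sum_congr rfl (fun p _ => e2 p), Finset.sum_sub_distrib, ← Finset.mul_sum]
    have e3 : ∑ p ∈ range (k+1), sgnS1 k (p+1) * m ^ (p+1)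
        = (∑ p ∈ range (k+1), sgnS1 k p * m ^ p) - sgnS1 k 0 * m ^ 0 := by
      rw [eq_sub_iff_add_eq, ← Finset.sum_range_succ' (fun p => sgnS1 k p * m ^ p) (k+1)]
      rw [Finset.sum_range_succ (fun p => sgnS1 k p * m ^ p) (k+1)]
      have h1 : sgnS1 k (k+1) = 0 := by
        unfold sgnS1; rw [stirling1_eq_zero_of_lt (by omega)]; simp
      rw [h1]; simp
    rw [e3]
    have e4 : ∑ p ∈ range (k+1), sgnS1 k p * m ^ (p+1)
        = m * ∑ p ∈ range (k+1), sgnS1 k p * m ^ p := by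
      rw [Finset.mul_sum]; exact Finset.sum_congr rfl (fun p _ => by ring)
    rw [e4]
    rcases Nat.eq_zero_or_pos k with hk | hk
    · subst hk; simp [sgnS1, stirling1]
    · have h2 : sgnS1 k 0 = 0 := by
        obtain ⟨k', rfl⟩ : ∃ k', k = k' + 1 := ⟨k - 1, by omega⟩
        unfold sgnS1; rw [stirling1_zero_right]; simp
      rw [h2]; ring

lemma indep (N : ℕ) (a : ℕ → ℤ)
    (h : ∀ m : ℕ, ∑ l ∈ range N, a l * (descPochhammer ℤ l).eval (m : ℤ) = 0) :
    ∀ l, l < N → a l = 0 := by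
  intro l
  induction l using Nat.strong_induction_on with
  | _ l ih =>
    intro hl
    have hsum := h l
    have hs : ∑ j ∈ range N, a j * (descPochhammer ℤ j).eval (l : ℤ)
        = a l * (descPochhammer ℤ l).eval (l : ℤ) := by
      apply Finset.sum_eq_single
      · intro j hj hne
        rcases lt_or_gt_of_ne hne with h1 | h1
        · rw [ih j h1 (Finset.mem_range.mp hj)]; ring
        · rw [descPochhammer_eval_eq_descFactorial ℤ l j,
            Nat.descFactorial_eq_zero_iff_lt.mpr h1]; simp
      · intro hln; exact absurd hl (by simpa using hln)
    rw [hs, descPochhammer_eval_eq_descFactorial ℤ l l, Nat.descFactorial_self] at hsum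
    rcases mul_eq_zero.mp hsum with h1 | h1
    · exact h1
    · exact absurd h1 (by exact_mod_cast Nat.factorial_ne_zero l)

lemma stirling_inv (k : ℕ) : ∀ l, l < k + 1 →
    (∑ p ∈ range (k+1), sgnS1 k p * (stirling2 p l : ℤ)) = if l = k then 1 else 0 := by
  have key : ∀ m : ℕ, ∑ l ∈ range (k+1),
      ((∑ p ∈ range (k+1), sgnS1 k p * (stirling2 p l : ℤ)) - (if l = k then 1 else 0))
        * (descPochhammer ℤ l).eval (m : ℤ) = 0 := by
    intro m
    simp only [sub_mul, Finset.sum_sub_distrib]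
    have e1 : ∑ l ∈ range (k+1),
        (∑ p ∈ range (k+1), sgnS1 k p * (stirling2 p l : ℤ)) * (descPochhammer ℤ l).eval (m:ℤ)
        = ∑ p ∈ range (k+1), sgnS1 k p *
            ∑ l ∈ range (k+1), (stirling2 p l : ℤ) * (descPochhammer ℤ l).eval (m:ℤ) := by
      simp only [Finset.sum_mul, Finset.mul_sum]
      rw [Finset.sum_comm]
      exact Finset.sum_congr rfl (fun p _ => Finset.sum_congr rfl (fun l _ => by ring))
    have e2 : ∀ p ∈ range (k+1),
        sgnS1 k p * (∑ l ∈ range (k+1), (stirling2 p l : ℤ) * (descPochhammer ℤ l).eval (m:ℤ))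
        = sgnS1 k p * (m:ℤ)^p := by
      intro p hp
      have hpk : p ≤ k := Nat.lt_succ_iff.mp (Finset.mem_range.mp hp)
      congr 1
      rw [id1 p (m:ℤ)]
      refine (Finset.sum_subset (Finset.range_subset_range.mpr (by omega)) ?_).symm
      intro x hx hnx
      rw [stirling2_eq_zero_of_lt
        (by simp only [Finset.mem_range] at hx hnx; omega)]
      simp
    have e3 : ∑ l ∈ range (k+1),
        (if l = k then (1:ℤ) else 0) * (descPochhammer ℤ l).eval (m:ℤ)
        = (descPochhammer ℤ k).eval (m:ℤ) := by
      rw [Finset.sum_eq_single k]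
      · simp
      · intro l _ hne; simp [hne]
      · intro h; exact absurd (Finset.self_mem_range_succ k) h
    rw [e1, Finset.sum_congr rfl e2, e3, ← id2 k (m:ℤ), sub_self]
  intro l hl
  have h := indep (k+1)
    (fun l => (∑ p ∈ range (k+1), sgnS1 k p * (stirling2 p l : ℤ)) - (if l = k then 1 else 0))
    key l hl
  exact sub_eq_zero.mp h

/-! ## Counting surjections and image decomposition -/

open Function

noncomputable def SurjCount (p q : ℕ) : ℕ := Nat.card {s : Fin p → Fin q // Surjective s}

lemma surjCount_eq_zero {p q : ℕ} (h : p < q) : SurjCount p q = 0 := by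
  haveI : IsEmpty {s : Fin p → Fin q // Surjective s} := by
    constructor
    rintro ⟨s, hs⟩
    have := Fintype.card_le_of_surjective s hs
    simp only [Fintype.card_fin] at this
    omega
  exact Nat.card_of_isEmpty

section Comb

variable {B : Type*} [DecidableEq B] [Fintype B] [LinearOrder B]

def imageFiberEquiv (p : ℕ) (t : Finset B) :
    {f : Fin p → B // Finset.univ.image f = t} ≃
      {s : Fin p → Fin t.card // Surjective s} where
  toFun f := ⟨fun j => (t.orderIsoOfFin rfl).symm ⟨f.1 j, by
      have h := Finset.mem_image_of_mem f.1 (Finset.mem_univ j)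
      rwa [f.2] at h⟩, by
    intro b
    have hb : ((t.orderIsoOfFin rfl) b : B) ∈ Finset.univ.image f.1 := by
      rw [f.2]; exact ((t.orderIsoOfFin rfl) b).2
    obtain ⟨j, -, hj⟩ := Finset.mem_image.mp hb
    refine ⟨j, ?_⟩
    rw [OrderIso.symm_apply_eq]
    exact Subtype.ext hj⟩
  invFun s := ⟨fun j => ((t.orderIsoOfFin rfl) (s.1 j) : B), by
    ext x
    simp only [Finset.mem_image, Finset.mem_univ, true_and]
    constructor
    · rintro ⟨j, rfl⟩; exact ((t.orderIsoOfFin rfl) (s.1 j)).2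
    · intro hx
      obtain ⟨j, hj⟩ := s.2 ((t.orderIsoOfFin rfl).symm ⟨x, hx⟩)
      exact ⟨j, by rw [hj, OrderIso.apply_symm_apply]⟩⟩
  left_inv f := by
    apply Subtype.ext; funext j
    simp
  right_inv s := by
    apply Subtype.ext; funext j
    exact (t.orderIsoOfFin rfl).symm_apply_apply _

lemma fiberCard (p : ℕ) (t : Finset B) :
    Nat.card {f : Fin p → B // Finset.univ.image f = t} = SurjCount p t.card :=
  Nat.card_congr (imageFiberEquiv p t)

lemma B1 (p : ℕ) (P : Finset B → Prop) [DecidablePred P] :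
    Nat.card {f : Fin p → B // P (Finset.univ.image f)}
      = ∑ q ∈ range (p+1), SurjCount p q * Nat.card {t : Finset B // t.card = q ∧ P t} := by
  classical
  have h1 : Nat.card {f : Fin p → B // P (Finset.univ.image f)}
      = (Finset.univ.filter (fun f : Fin p → B => P (Finset.univ.image f))).card := by
    rw [Nat.card_eq_fintype_card, Fintype.card_subtype]
  have h2 : (Finset.univ.filter (fun f : Fin p → B => P (Finset.univ.image f))).card
      = ∑ t ∈ Finset.univ.filter P,
          ((Finset.univ.filter (fun f : Fin p → B => P (Finset.univ.image f))).filter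
            (fun f => Finset.univ.image f = t)).card :=
    Finset.card_eq_sum_card_fiberwise (fun f hf => by
      simp only [Finset.coe_filter, Finset.mem_filter, Finset.mem_univ, true_and, Set.mem_setOf_eq] at hf ⊢; exact hf)
  have h3 : ∀ t ∈ Finset.univ.filter P,
      ((Finset.univ.filter (fun f : Fin p → B => P (Finset.univ.image f))).filter
        (fun f => Finset.univ.image f = t)).card = SurjCount p t.card := by
    intro t ht
    rw [Finset.filter_filter]
    have hPt : P t := (Finset.mem_filter.mp ht).2
    have he : Finset.univ.filter
          (fun f : Fin p → B => P (Finset.univ.image f) ∧ Finset.univ.image f = t)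
        = Finset.univ.filter (fun f : Fin p → B => Finset.univ.image f = t) := by
      apply Finset.filter_congr
      intro f _
      constructor
      · exact And.right
      · intro h; exact ⟨by rw [h]; exact hPt, h⟩
    rw [he, ← fiberCard p t, Nat.card_eq_fintype_card, Fintype.card_subtype]
  rw [h1, h2, Finset.sum_congr rfl h3]
  have h4 : ∑ t ∈ Finset.univ.filter P, SurjCount p t.card
      = ∑ q ∈ range (Fintype.card B + p + 1),
          ∑ t ∈ (Finset.univ.filter P).filter (fun t => t.card = q), SurjCount p t.card :=
    (Finset.sum_fiberwise_of_maps_to (fun t _ => Finset.mem_range.mpr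
      (by have := Finset.card_le_univ t; omega)) _).symm
  rw [h4]
  have h5 : ∀ q, ∑ t ∈ (Finset.univ.filter P).filter (fun t => t.card = q), SurjCount p t.card
      = SurjCount p q * Nat.card {t : Finset B // t.card = q ∧ P t} := by
    intro q
    rw [Finset.sum_congr rfl (fun t ht => by
      rw [(Finset.mem_filter.mp ht).2]), Finset.sum_const, smul_eq_mul, mul_comm]
    congr 1
    rw [Finset.filter_filter, Nat.card_eq_fintype_card, Fintype.card_subtype]
    apply Finset.card_bij (fun t _ => t) ?_ ?_ ?_ |>.symm
    · intro t ht
      simp only [Finset.mem_filter, Finset.mem_univ, true_and] at ht ⊢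
      exact ⟨ht.2, ht.1⟩
    · intro a _ b _ h; exact h
    · intro t ht
      simp only [Finset.mem_filter, Finset.mem_univ, true_and] at ht ⊢
      exact ⟨t, ⟨ht.2, ht.1⟩, rfl⟩
  rw [Finset.sum_congr rfl (fun q _ => h5 q)]
  refine (Finset.sum_subset (Finset.range_subset_range.mpr (by omega)) ?_).symm
  intro q hq hnq
  rw [surjCount_eq_zero (by
    simp only [Finset.mem_range] at hq hnq; omega), zero_mul]

end Comb

lemma stirling2_self : ∀ n, stirling2 n n = 1 := by
  intro n
  induction n with
  | zero => rfl
  | succ n ih =>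
    show (n + 1) * stirling2 n (n + 1) + stirling2 n n = 1
    rw [stirling2_eq_zero_of_lt (Nat.lt_succ_self n), ih, mul_zero]

/-! ## The surjection recurrence -/

def consSurjEquiv (p q : ℕ) :
    {s : Fin (p+1) → Fin (q+1) // Surjective s} ≃
      {x : Fin (q+1) × (Fin p → Fin (q+1)) // ∀ b, b ≠ x.1 → ∃ j, x.2 j = b} where
  toFun s := ⟨(s.1 0, fun j => s.1 j.succ), by
    rintro b hb
    obtain ⟨j, hj⟩ := s.2 b
    rcases Fin.eq_zero_or_eq_succ j with rfl | ⟨i, rfl⟩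
    · exact absurd hj.symm hb
    · exact ⟨i, hj⟩⟩
  invFun x := ⟨Fin.cons x.1.1 x.1.2, by
    intro b
    by_cases hb : b = x.1.1
    · exact ⟨0, by rw [Fin.cons_zero]; exact hb.symm⟩
    · obtain ⟨j, hj⟩ := x.2 b hb
      exact ⟨j.succ, by rw [Fin.cons_succ]; exact hj⟩⟩
  left_inv s := Subtype.ext (Fin.cons_self_tail s.1)
  right_inv x := by
    obtain ⟨⟨v, g⟩, hx⟩ := x
    apply Subtype.ext
    apply Prod.ext
    · simp
    · funext j
      simp

def prodSubtypeSnd {α β : Type*} (Q : β → Prop) :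
    {x : α × β // Q x.2} ≃ α × {b // Q b} where
  toFun x := (x.1.1, ⟨x.1.2, x.2⟩)
  invFun y := ⟨(y.1, y.2.1), y.2.2⟩
  left_inv := fun ⟨⟨_, _⟩, _⟩ => rfl
  right_inv := fun ⟨_, _, _⟩ => rfl

def complEquiv {p q : ℕ} (v : Fin (q+1)) :
    {g : Fin p → Fin (q+1) // ∀ b, (∃ j, g j = b) ↔ b ≠ v} ≃
      {h : Fin p → Fin q // Surjective h} where
  toFun g := ⟨fun j => ((finSuccEquiv' v) (g.1 j)).get (by
      rw [Option.isSome_iff_ne_none]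
      intro hnone
      have hgv : g.1 j = v := by
        have := congrArg (finSuccEquiv' v).symm hnone
        simpa using this
      exact ((g.2 (g.1 j)).mp ⟨j, rfl⟩) hgv), by
    intro b
    obtain ⟨j, hj⟩ := (g.2 (v.succAbove b)).mpr (Fin.succAbove_ne v b)
    refine ⟨j, ?_⟩
    have h1 : (finSuccEquiv' v) (g.1 j) = some b := by rw [hj, finSuccEquiv'_succAbove]
    simp [h1]⟩
  invFun h := ⟨fun j => v.succAbove (h.1 j), by
    intro b
    constructor
    · rintro ⟨j, rfl⟩; exact Fin.succAbove_ne v (h.1 j)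
    · intro hb
      obtain ⟨c, hc⟩ := Fin.exists_succAbove_eq (Ne.symm hb).symm
      obtain ⟨j, hj⟩ := h.2 c
      exact ⟨j, by show v.succAbove (h.1 j) = b; rw [hj, hc]⟩⟩
  left_inv g := by
    apply Subtype.ext; funext j
    have hne : g.1 j ≠ v := (g.2 (g.1 j)).mp ⟨j, rfl⟩
    obtain ⟨b, hb⟩ : ∃ b, (finSuccEquiv' v) (g.1 j) = some b := by
      rcases hx : (finSuccEquiv' v) (g.1 j) with _ | b
      · exact absurd (by simpa using congrArg (finSuccEquiv' v).symm hx) hne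
      · exact ⟨b, rfl⟩
    have h2 : g.1 j = v.succAbove b := by
      have := congrArg (finSuccEquiv' v).symm hb
      simpa using this
    simp only [hb, Option.get_some]
    exact h2.symm
  right_inv h := by
    apply Subtype.ext; funext j
    simp [finSuccEquiv'_succAbove]

def complAllEquiv (p q : ℕ) :
    {x : Fin (q+1) × (Fin p → Fin (q+1)) // ∀ b, (∃ j, x.2 j = b) ↔ b ≠ x.1}
      ≃ Fin (q+1) × {h : Fin p → Fin q // Surjective h} where
  toFun x := (x.1.1, complEquiv x.1.1 ⟨x.1.2, x.2⟩)
  invFun y := ⟨(y.1, ((complEquiv y.1).symm y.2).1), ((complEquiv y.1).symm y.2).2⟩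
  left_inv x := by
    obtain ⟨⟨v, g⟩, hx⟩ := x
    apply Subtype.ext
    simp
  right_inv y := by
    obtain ⟨v, s⟩ := y
    simp

lemma surj_recurrence (p q : ℕ) :
    SurjCount (p+1) (q+1) = (q+1) * SurjCount p (q+1) + (q+1) * SurjCount p q := by
  classical
  rw [show SurjCount (p+1) (q+1) = Nat.card
      {x : Fin (q+1) × (Fin p → Fin (q+1)) // ∀ b, b ≠ x.1 → ∃ j, x.2 j = b} from
    Nat.card_congr (consSurjEquiv p q)]
  set Pr : Fin (q+1) × (Fin p → Fin (q+1)) → Prop := fun x => ∀ b, b ≠ x.1 → ∃ j, x.2 j = b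
    with hPr
  have hsplit : Nat.card {x // Pr x}
      = Nat.card {y : {x // Pr x} // Surjective y.1.2}
        + Nat.card {y : {x // Pr x} // ¬ Surjective y.1.2} := by
    rw [← Nat.card_sum]
    exact (Nat.card_congr (Equiv.sumCompl (fun y : {x // Pr x} => Surjective y.1.2))).symm
  rw [hsplit]
  have h1 : Nat.card {y : {x // Pr x} // Surjective y.1.2} = (q+1) * SurjCount p (q+1) := by
    have e : {y : {x // Pr x} // Surjective y.1.2}
        ≃ Fin (q+1) × {g : Fin p → Fin (q+1) // Surjective g} := by
      refine ((Equiv.subtypeSubtypeEquivSubtypeInter Pr (fun x => Surjective x.2)).trans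
        ((Equiv.subtypeEquivRight ?_).trans (prodSubtypeSnd _)))
      intro x
      constructor
      · exact And.right
      · intro h; exact ⟨fun b _ => h b, h⟩
    rw [Nat.card_congr e, Nat.card_prod, Nat.card_eq_fintype_card, Fintype.card_fin]
    rfl
  have h2 : Nat.card {y : {x // Pr x} // ¬ Surjective y.1.2} = (q+1) * SurjCount p q := by
    have e : {y : {x // Pr x} // ¬ Surjective y.1.2}
        ≃ Fin (q+1) × {h : Fin p → Fin q // Surjective h} := by
      refine ((Equiv.subtypeSubtypeEquivSubtypeInter Pr (fun x => ¬ Surjective x.2)).trans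
        ((Equiv.subtypeEquivRight ?_).trans (complAllEquiv p q)))
      intro x
      constructor
      · rintro ⟨hPrx, hns⟩ b
        constructor
        · rintro ⟨j, hj⟩ heq
          apply hns
          intro c
          by_cases hc : c = x.1
          · exact ⟨j, by rw [hj, heq, hc]⟩
          · exact hPrx c hc
        · exact hPrx b
      · intro h
        constructor
        · intro b hb; exact (h b).mpr hb
        · intro hs
          obtain ⟨j, hj⟩ := hs x.1
          exact (h x.1).mp ⟨j, hj⟩ rfl
    rw [Nat.card_congr e, Nat.card_prod, Nat.card_eq_fintype_card, Fintype.card_fin]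
    rfl
  rw [h1, h2]

lemma B2 : ∀ p q, SurjCount p q = q ! * stirling2 p q := by
  intro p
  induction p with
  | zero =>
    intro q
    cases q with
    | zero =>
      haveI : Unique {s : Fin 0 → Fin 0 // Surjective s} :=
        { default := ⟨fun i => i.elim0, fun b => b.elim0⟩
          uniq := fun a => Subtype.ext (funext fun j => j.elim0) }
      rw [show SurjCount 0 0 = 1 from Nat.card_unique]
      rfl
    | succ q =>
      rw [surjCount_eq_zero (Nat.succ_pos q),
        show stirling2 0 (q+1) = 0 from rfl, mul_zero]
  | succ p ih =>
    intro q
    cases q with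
    | zero =>
      haveI : IsEmpty {s : Fin (p+1) → Fin 0 // Surjective s} := ⟨fun s => (s.1 0).elim0⟩
      rw [show SurjCount (p+1) 0 = 0 from Nat.card_of_isEmpty,
        show stirling2 (p+1) 0 = 0 from rfl, mul_zero]
    | succ q =>
      rw [surj_recurrence p q, ih, ih,
        show stirling2 (p+1) (q+1) = (q+1) * stirling2 p (q+1) + stirling2 p q from rfl,
        Nat.factorial_succ]
      ring

/-! ## Final assembly -/


lemma neg_one_pow_sub {k p : ℕ} (hp : p ≤ k) : ((-1:ℤ))^(k-p) = (-1)^(k+p) := by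
  have h2 : k + p = (k - p) + 2*p := by omega
  rw [h2, pow_add, pow_mul, neg_one_sq, one_pow, mul_one]

/-- The multivariable coefficients
`c^(k)_L = ∑_{p=1}^k (-1)^(k-p) s(k,p) ∏_i S(p, l_i)`. -/
def cMulti (k : ℕ) {n : ℕ} (L : Fin n → ℕ) : ℤ :=
  ∑ p ∈ Finset.Icc 1 k,
    (-1 : ℤ) ^ (k - p) * (stirling1 k p : ℤ) * ∏ i, (stirling2 p (L i) : ℤ)

/-- The number of `n`-dimensional `k`-conjoint ranking tables of size `l₁ × ⋯ × lₙ`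
is `(∏_i l_i!) · c^(k)_L`: such a table is an injective placement of `1,…,k` in the
cells of the array hitting every slice in every dimension. -/
theorem multi_conjoint_ranking_count (k n : ℕ) (hk : 1 ≤ k) (hn : 1 ≤ n)
    (L : Fin n → ℕ) (hL : ∀ i, 1 ≤ L i) (hmax : ∀ i, L i ≤ k) (hprod : k ≤ ∏ i, L i) :
    (Nat.card {f : Fin k → (∀ i, Fin (L i)) //
        Function.Injective f ∧ ∀ (i : Fin n) (a : Fin (L i)), ∃ j, f j i = a} : ℤ) =
      (∏ i, ((L i)! : ℤ)) * cMulti k L := by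
  classical
  set B := ∀ i, Fin (L i) with hB
  letI : LinearOrder B :=
    LinearOrder.lift' (fun b => Fintype.equivFin B b) (Fintype.equivFin B).injective
  set Pt : Finset B → Prop := fun t => ∀ (i : Fin n) (a : Fin (L i)), ∃ b ∈ t, b i = a with hPt
  -- product formula for the unrestricted count
  have hNprod : ∀ p : ℕ, Nat.card {f : Fin p → B // Pt (Finset.univ.image f)}
      = ∏ i, SurjCount p (L i) := by
    intro p
    have e1 : {f : Fin p → B // Pt (Finset.univ.image f)}
        ≃ {f : Fin p → B // ∀ i a, ∃ j, f j i = a} := by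
      apply Equiv.subtypeEquivRight
      intro f
      constructor
      · intro h i a
        obtain ⟨b, hb, hba⟩ := h i a
        obtain ⟨j, -, rfl⟩ := Finset.mem_image.mp hb
        exact ⟨j, hba⟩
      · intro h i a
        obtain ⟨j, hj⟩ := h i a
        exact ⟨f j, Finset.mem_image_of_mem _ (Finset.mem_univ j), hj⟩
    have e2 : {f : Fin p → B // ∀ i a, ∃ j, f j i = a}
        ≃ ∀ i, {g : Fin p → Fin (L i) // Surjective g} :=
      { toFun := fun f i => ⟨fun j => f.1 j i, fun a => f.2 i a⟩
        invFun := fun g => ⟨fun j i => (g i).1 j, fun i a => (g i).2 a⟩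
        left_inv := fun f => by apply Subtype.ext; rfl
        right_inv := fun g => by funext i; apply Subtype.ext; rfl }
    rw [Nat.card_congr (e1.trans e2), Nat.card_pi]
    rfl
  have hNsum : ∀ p : ℕ, Nat.card {f : Fin p → B // Pt (Finset.univ.image f)}
      = ∑ q ∈ range (p+1), SurjCount p q * Nat.card {t : Finset B // t.card = q ∧ Pt t} :=
    fun p => B1 p Pt
  -- the restricted count
  have hLHS : Nat.card {f : Fin k → B //
        Function.Injective f ∧ ∀ (i : Fin n) (a : Fin (L i)), ∃ j, f j i = a}
      = k ! * Nat.card {t : Finset B // t.card = k ∧ Pt t} := by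
    have e : {f : Fin k → B //
          Function.Injective f ∧ ∀ (i : Fin n) (a : Fin (L i)), ∃ j, f j i = a}
        ≃ {f : Fin k → B // (fun t => t.card = k ∧ Pt t) (Finset.univ.image f)} := by
      apply Equiv.subtypeEquivRight
      intro f
      constructor
      · rintro ⟨hinj, hcov⟩
        refine ⟨?_, ?_⟩
        · rw [Finset.card_image_of_injective _ hinj, Finset.card_univ, Fintype.card_fin]
        · intro i a
          obtain ⟨j, hj⟩ := hcov i a
          exact ⟨f j, Finset.mem_image_of_mem _ (Finset.mem_univ j), hj⟩
      · rintro ⟨hcard, hcov⟩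
        constructor
        · have h1 : (Finset.univ.image f).card = (Finset.univ : Finset (Fin k)).card := by
            rw [hcard, Finset.card_univ, Fintype.card_fin]
          have h2 := Finset.card_image_iff.mp h1
          rw [Finset.coe_univ] at h2
          exact Set.injOn_univ.mp h2
        · intro i a
          obtain ⟨b, hb, hba⟩ := hcov i a
          obtain ⟨j, -, rfl⟩ := Finset.mem_image.mp hb
          exact ⟨j, hba⟩
    rw [Nat.card_congr e]
    refine (B1 k (fun t => t.card = k ∧ Pt t)).trans ?_
    have hsum : ∑ q ∈ range (k+1),
          SurjCount k q * Nat.card {t : Finset B // t.card = q ∧ (t.card = k ∧ Pt t)}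
        = SurjCount k k * Nat.card {t : Finset B // t.card = k ∧ (t.card = k ∧ Pt t)} := by
      apply Finset.sum_eq_single
      · intro q _ hne
        haveI : IsEmpty {t : Finset B // t.card = q ∧ (t.card = k ∧ Pt t)} :=
          ⟨fun t => hne (by rw [← t.2.1, t.2.2.1])⟩
        rw [Nat.card_of_isEmpty, mul_zero]
      · intro hk'
        exact absurd (Finset.self_mem_range_succ k) hk'
    refine hsum.trans ?_
    rw [B2 k k, stirling2_self, mul_one]
    congr 1
    exact Nat.card_congr (Equiv.subtypeEquivRight
      (fun t => ⟨fun h => ⟨h.1, h.2.2⟩, fun h => ⟨h.1, h.1, h.2⟩⟩))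
  rw [hLHS]
  -- the integer-valued unrestricted count in terms of Stirling data
  have hNZ : ∀ p, p ≤ k → ((Nat.card {f : Fin p → B // Pt (Finset.univ.image f)} : ℕ) : ℤ)
      = ∑ q ∈ range (k+1), (q ! : ℤ) * (stirling2 p q : ℤ)
          * (Nat.card {t : Finset B // t.card = q ∧ Pt t} : ℤ) := by
    intro p hp
    rw [hNsum p, Nat.cast_sum]
    have hext : ∑ q ∈ range (p+1),
          ((SurjCount p q * Nat.card {t : Finset B // t.card = q ∧ Pt t} : ℕ) : ℤ)
        = ∑ q ∈ range (k+1),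
          ((SurjCount p q * Nat.card {t : Finset B // t.card = q ∧ Pt t} : ℕ) : ℤ) := by
      apply Finset.sum_subset (Finset.range_subset_range.mpr (Nat.succ_le_succ hp))
      intro x hx hnx
      have h1 : ¬ x < p + 1 := fun hlt => hnx (Finset.mem_range.mpr hlt)
      rw [surjCount_eq_zero (Nat.lt_of_succ_le (Nat.le_of_not_lt h1)), zero_mul, Nat.cast_zero]
    rw [hext]
    apply Finset.sum_congr rfl
    intro q _
    rw [B2 p q]
    push_cast
    ring
  -- main computation
  have step1 : (∏ i, ((L i)! : ℤ)) * cMulti k L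
      = ∑ p ∈ Finset.Icc 1 k, sgnS1 k p
          * ((Nat.card {f : Fin p → B // Pt (Finset.univ.image f)} : ℕ) : ℤ) := by
    rw [cMulti, Finset.mul_sum]
    apply Finset.sum_congr rfl
    intro p hp
    obtain ⟨hp1, hp2⟩ := Finset.mem_Icc.mp hp
    have hNp : ((Nat.card {f : Fin p → B // Pt (Finset.univ.image f)} : ℕ) : ℤ)
        = ∏ i, (((L i)! : ℤ) * (stirling2 p (L i) : ℤ)) := by
      rw [hNprod p]
      push_cast
      apply Finset.prod_congr rfl
      intro i _
      exact_mod_cast congrArg (Nat.cast (R := ℤ)) (B2 p (L i))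
    rw [hNp, neg_one_pow_sub hp2, Finset.prod_mul_distrib]
    simp only [sgnS1]
    ring
  have step2 : ∑ p ∈ Finset.Icc 1 k, sgnS1 k p
          * ((Nat.card {f : Fin p → B // Pt (Finset.univ.image f)} : ℕ) : ℤ)
      = ∑ p ∈ range (k+1), sgnS1 k p
          * ((Nat.card {f : Fin p → B // Pt (Finset.univ.image f)} : ℕ) : ℤ) := by
    apply Finset.sum_subset
    · intro x hx
      exact Finset.mem_range.mpr (Nat.lt_succ_of_le (Finset.mem_Icc.mp hx).2)
    · intro x hx hnx
      have hx0 : x = 0 := by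
        rcases Nat.eq_zero_or_pos x with h | h
        · exact h
        · exact absurd (Finset.mem_Icc.mpr
            ⟨h, Nat.lt_succ_iff.mp (Finset.mem_range.mp hx)⟩) hnx
      subst hx0
      obtain ⟨k', rfl⟩ : ∃ k', k = k' + 1 := ⟨k - 1, (Nat.succ_pred_eq_of_pos hk).symm⟩
      rw [show sgnS1 (k' + 1) 0 = 0 by
        rw [sgnS1, stirling1_zero_right, Nat.cast_zero, mul_zero], zero_mul]
  have step3 : ∑ p ∈ range (k+1), sgnS1 k p
          * ((Nat.card {f : Fin p → B // Pt (Finset.univ.image f)} : ℕ) : ℤ)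
      = ∑ q ∈ range (k+1),
          (∑ p ∈ range (k+1), sgnS1 k p * (stirling2 p q : ℤ))
            * ((q ! : ℤ) * (Nat.card {t : Finset B // t.card = q ∧ Pt t} : ℤ)) := by
    rw [Finset.sum_congr rfl (fun p hp => by
      rw [hNZ p (Nat.lt_succ_iff.mp (Finset.mem_range.mp hp))])]
    simp_rw [Finset.mul_sum]
    rw [Finset.sum_comm]
    apply Finset.sum_congr rfl
    intro q _
    rw [Finset.sum_mul]
    apply Finset.sum_congr rfl
    intro p _
    ring
  have step4 : ∑ q ∈ range (k+1),
          (∑ p ∈ range (k+1), sgnS1 k p * (stirling2 p q : ℤ))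
            * ((q ! : ℤ) * (Nat.card {t : Finset B // t.card = q ∧ Pt t} : ℤ))
      = (k ! : ℤ) * (Nat.card {t : Finset B // t.card = k ∧ Pt t} : ℤ) := by
    rw [Finset.sum_congr rfl (fun q hq => by
      rw [stirling_inv k q (Finset.mem_range.mp hq)])]
    rw [Finset.sum_eq_single k]
    · rw [if_pos rfl, one_mul]
    · intro q _ hne
      rw [if_neg hne, zero_mul]
    · intro h
      exact absurd (Finset.self_mem_range_succ k) h
  rw [step1, step2, step3, step4, Nat.cast_mul]
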